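/- Let M be a matching of maximum weight among all matchings of size n/3 in G. Then w(M) ≥ Σ_{i=1}^{8} Σ_{xyz ∈ P*_i} max{w(xy), w(yz)}, and for each i ∈ {1, …, 8}, Σ_{xyz ∈ P*_i} max{w(xy), w(yz)} ≥ max{w(X_i), w(Y_i)}. -/

import Mathlib

open Finset
open scoped Classical

namespace MW3PP

/-- A 3-path `xyz`: a path on three distinct vertices with middle vertex `y`. -/
structure P3 (V : Type*) where
  x : V
  y : V
  z : V
  hxy : x ≠ y
  hyz : y ≠ z
  hxz : x ≠ z

variable {V : Type*} [Fintype V] [DecidableEq V]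

/-- The vertex set of a 3-path. -/
def P3.verts (p : P3 V) : Finset V := {p.x, p.y, p.z}

/-- The two edges of a 3-path. -/
def P3.edges (p : P3 V) : Finset (Sym2 V) := {s(p.x, p.y), s(p.y, p.z)}

/-- The weight of a 3-path. -/
def P3.wt (w : Sym2 V → ℝ) (p : P3 V) : ℝ := w s(p.x, p.y) + w s(p.y, p.z)

/-- The total weight of a set of edges. -/
def ew (w : Sym2 V → ℝ) (F : Finset (Sym2 V)) : ℝ := ∑ e ∈ F, w e

/-- The total weight of a set of 3-paths. -/
def pw (w : Sym2 V → ℝ) (P : Finset (P3 V)) : ℝ := ∑ p ∈ P, p.wt w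

/-- `∑_{xyz ∈ S} max (w (xy)) (w (yz))`. -/
def maxSum (w : Sym2 V → ℝ) (S : Finset (P3 V)) : ℝ :=
  ∑ p ∈ S, max (w s(p.x, p.y)) (w s(p.y, p.z))

/-- A perfect 3-path packing: `n/3` pairwise vertex-disjoint 3-paths covering all vertices. -/
def IsPacking (P : Finset (P3 V)) : Prop :=
  P.card = Fintype.card V / 3 ∧
  (∀ p ∈ P, ∀ q ∈ P, p ≠ q → Disjoint p.verts q.verts) ∧
  (∀ v : V, ∃ p ∈ P, v ∈ p.verts)

/-- A maximum-weight perfect 3-path packing. -/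
def IsMaxPacking (w : Sym2 V → ℝ) (P : Finset (P3 V)) : Prop :=
  IsPacking P ∧ ∀ Q : Finset (P3 V), IsPacking Q → pw w Q ≤ pw w P

/-- A matching: a set of pairwise vertex-disjoint (non-loop) edges. -/
def IsMatching (M : Finset (Sym2 V)) : Prop :=
  (∀ e ∈ M, ¬ e.IsDiag) ∧
  ∀ e ∈ M, ∀ f ∈ M, e ≠ f → ∀ v : V, v ∈ e → v ∉ f

/-- A maximum-weight matching among all matchings of size `k`. -/
def IsMaxMatchingOfSize (w : Sym2 V → ℝ) (k : ℕ) (M : Finset (Sym2 V)) : Prop :=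
  IsMatching M ∧ M.card = k ∧
  ∀ M' : Finset (Sym2 V), IsMatching M' → M'.card = k → ew w M' ≤ ew w M

/-- `v ∈ V(M)` : vertex `v` is covered by the matching `M`. -/
def covered (M : Finset (Sym2 V)) (v : V) : Prop := ∃ e ∈ M, v ∈ e

/-- `e_u` : the edge of `M` containing `u` (junk value if there is none). -/
noncomputable def eMatch (M : Finset (Sym2 V)) (u : V) : Sym2 V :=
  if h : ∃ e ∈ M, u ∈ e then h.choose else s(u, u)

/-- The cost `c` of an edge with respect to a matching `M`:
`c(uv) = w(uv) - min (w (e_u)) (w (e_v))` if both endpoints are covered by `M`,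
and `c(uv) = w(uv)` otherwise. -/
noncomputable def cost (w : Sym2 V → ℝ) (M : Finset (Sym2 V)) : Sym2 V → ℝ :=
  Sym2.lift ⟨fun u v =>
    if covered M u ∧ covered M v then
      w s(u, v) - min (w (eMatch M u)) (w (eMatch M v))
    else w s(u, v), by
      intro u v
      dsimp only
      by_cases h : covered M u ∧ covered M v
      · rw [if_pos h, if_pos (show covered M v ∧ covered M u from ⟨h.2, h.1⟩),
          Sym2.eq_swap, min_comm]
      · rw [if_neg h, if_neg (show ¬(covered M v ∧ covered M u) from fun h' => h ⟨h'.2, h'.1⟩),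
          Sym2.eq_swap]⟩

/-- The total cost of a set of edges. -/
noncomputable def cw (w : Sym2 V → ℝ) (M F : Finset (Sym2 V)) : ℝ := ∑ e ∈ F, cost w M e

/-- The number of vertices of the 3-path `p` covered by `M`. -/
noncomputable def kcnt (M : Finset (Sym2 V)) (p : P3 V) : ℕ :=
  (p.verts.filter fun v => covered M v).card

/-- Exactly one of the two edges of `p` lies in `M`. -/
def exOne (M : Finset (Sym2 V)) (p : P3 V) : Prop :=
  (s(p.x, p.y) ∈ M ∧ s(p.y, p.z) ∉ M) ∨ (s(p.x, p.y) ∉ M ∧ s(p.y, p.z) ∈ M)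

def cls1 (M : Finset (Sym2 V)) (p : P3 V) : Prop := kcnt M p = 0
def cls2 (M : Finset (Sym2 V)) (p : P3 V) : Prop := kcnt M p = 1 ∧ ¬ covered M p.y
def cls3 (M : Finset (Sym2 V)) (p : P3 V) : Prop := kcnt M p = 1 ∧ covered M p.y
def cls4 (M : Finset (Sym2 V)) (p : P3 V) : Prop := kcnt M p = 2 ∧ ¬ covered M p.y
def cls5 (M : Finset (Sym2 V)) (p : P3 V) : Prop := kcnt M p = 2 ∧ covered M p.y ∧ exOne M p
def cls6 (M : Finset (Sym2 V)) (p : P3 V) : Prop :=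
  kcnt M p = 2 ∧ covered M p.y ∧ s(p.x, p.y) ∉ M ∧ s(p.y, p.z) ∉ M
def cls7 (M : Finset (Sym2 V)) (p : P3 V) : Prop := kcnt M p = 3 ∧ exOne M p
def cls8 (M : Finset (Sym2 V)) (p : P3 V) : Prop :=
  kcnt M p = 3 ∧ s(p.x, p.y) ∉ M ∧ s(p.y, p.z) ∉ M

/-- The subset of a set of 3-paths satisfying a predicate. -/
noncomputable def psel (P : Finset (P3 V)) (c : P3 V → Prop) : Finset (P3 V) := P.filter c

/-- The set of all edges of the 3-paths in `S`. -/
def Esub (S : Finset (P3 V)) : Finset (Sym2 V) := S.biUnion P3.edges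

/-- The heaviest edge of a 3-path (the edge `xy` in case of a tie). -/
noncomputable def heavy (w : Sym2 V → ℝ) (p : P3 V) : Sym2 V :=
  if w s(p.y, p.z) ≤ w s(p.x, p.y) then s(p.x, p.y) else s(p.y, p.z)

noncomputable def X1 (w : Sym2 V → ℝ) (P : Finset (P3 V)) (M : Finset (Sym2 V)) :
    Finset (Sym2 V) := (psel P (cls1 M)).image (heavy w)
noncomputable def X2 (P : Finset (P3 V)) (M : Finset (Sym2 V)) : Finset (Sym2 V) :=
  (psel P (cls2 M)).image fun p => if covered M p.x then s(p.x, p.y) else s(p.y, p.z)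
noncomputable def X3 (w : Sym2 V → ℝ) (P : Finset (P3 V)) (M : Finset (Sym2 V)) :
    Finset (Sym2 V) := (psel P (cls3 M)).image (heavy w)
noncomputable def X4 (w : Sym2 V → ℝ) (P : Finset (P3 V)) (M : Finset (Sym2 V)) :
    Finset (Sym2 V) := (psel P (cls4 M)).image (heavy w)
noncomputable def X5 (P : Finset (P3 V)) (M : Finset (Sym2 V)) : Finset (Sym2 V) :=
  (psel P (cls5 M)).image fun p => if s(p.x, p.y) ∈ M then s(p.y, p.z) else s(p.x, p.y)
noncomputable def X6 (P : Finset (P3 V)) (M : Finset (Sym2 V)) : Finset (Sym2 V) :=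
  (psel P (cls6 M)).image fun p => if covered M p.x then s(p.y, p.z) else s(p.x, p.y)
noncomputable def X7 (P : Finset (P3 V)) (M : Finset (Sym2 V)) : Finset (Sym2 V) :=
  (psel P (cls7 M)).image fun p => if s(p.x, p.y) ∈ M then s(p.y, p.z) else s(p.x, p.y)
noncomputable def X8 (w : Sym2 V → ℝ) (P : Finset (P3 V)) (M : Finset (Sym2 V)) :
    Finset (Sym2 V) := (psel P (cls8 M)).image (heavy w)

noncomputable def Y1 (w : Sym2 V → ℝ) (P : Finset (P3 V)) (M : Finset (Sym2 V)) :
    Finset (Sym2 V) := Esub (psel P (cls1 M)) \ X1 w P M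
noncomputable def Y2 (P : Finset (P3 V)) (M : Finset (Sym2 V)) : Finset (Sym2 V) :=
  Esub (psel P (cls2 M)) \ X2 P M
noncomputable def Y3 (w : Sym2 V → ℝ) (P : Finset (P3 V)) (M : Finset (Sym2 V)) :
    Finset (Sym2 V) := Esub (psel P (cls3 M)) \ X3 w P M
noncomputable def Y4 (w : Sym2 V → ℝ) (P : Finset (P3 V)) (M : Finset (Sym2 V)) :
    Finset (Sym2 V) := Esub (psel P (cls4 M)) \ X4 w P M
noncomputable def Y5 (P : Finset (P3 V)) (M : Finset (Sym2 V)) : Finset (Sym2 V) :=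
  Esub (psel P (cls5 M)) \ X5 P M
noncomputable def Y6 (P : Finset (P3 V)) (M : Finset (Sym2 V)) : Finset (Sym2 V) :=
  Esub (psel P (cls6 M)) \ X6 P M
noncomputable def Y7 (P : Finset (P3 V)) (M : Finset (Sym2 V)) : Finset (Sym2 V) :=
  Esub (psel P (cls7 M)) \ X7 P M
noncomputable def Y8 (w : Sym2 V → ℝ) (P : Finset (P3 V)) (M : Finset (Sym2 V)) :
    Finset (Sym2 V) := Esub (psel P (cls8 M)) \ X8 w P M

/-- An edge is a middle edge (w.r.t. `M`) if exactly one of its endpoints lies in `V(M)`. -/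
def isMiddle (M : Finset (Sym2 V)) (e : Sym2 V) : Prop :=
  ∃ u v : V, e = s(u, v) ∧ covered M u ∧ ¬ covered M v

/-- Two edges share a vertex. -/
def shares (e f : Sym2 V) : Prop := ∃ v, v ∈ e ∧ v ∈ f

/-- `g` is a middle edge of some 3-path in `S`. -/
def middleIn (M : Finset (Sym2 V)) (S : Finset (P3 V)) (g : Sym2 V) : Prop :=
  (∃ p ∈ S, g ∈ p.edges) ∧ isMiddle M g

/-- The 3-paths of `P` lying in classes 2, 3 or 4. -/
noncomputable def P234 (P : Finset (P3 V)) (M : Finset (Sym2 V)) : Finset (P3 V) :=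
  psel P fun p => cls2 M p ∨ cls3 M p ∨ cls4 M p

/-- `M_1`: edges of `M` sharing a vertex with at least one middle edge of a 3-path of `P*_6`. -/
noncomputable def Mset1 (P : Finset (P3 V)) (M : Finset (Sym2 V)) : Finset (Sym2 V) :=
  M.filter fun f => ∃ g, middleIn M (psel P (cls6 M)) g ∧ shares f g

/-- `M_2`: edges of `M` sharing a vertex with at least one middle edge, all middle edges met
belonging to 3-paths of `P*_2 ∪ P*_3 ∪ P*_4`. -/
noncomputable def Mset2 (P : Finset (P3 V)) (M : Finset (Sym2 V)) : Finset (Sym2 V) :=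
  M.filter fun f =>
    (∃ g, middleIn M P g ∧ shares f g) ∧
    ∀ g, middleIn M P g → shares f g → middleIn M (P234 P M) g

/-- `M_3 = M ∩ E(P*_7)`. -/
noncomputable def Mset3 (P : Finset (P3 V)) (M : Finset (Sym2 V)) : Finset (Sym2 V) :=
  M ∩ Esub (psel P (cls7 M))

/-- `M_4 = M ∩ E(P*_5)`. -/
noncomputable def Mset4 (P : Finset (P3 V)) (M : Finset (Sym2 V)) : Finset (Sym2 V) :=
  M ∩ Esub (psel P (cls5 M))

/-- The middle edges of 3-paths of `P*_6`. -/
noncomputable def mid6 (P : Finset (P3 V)) (M : Finset (Sym2 V)) : Finset (Sym2 V) :=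
  (Esub (psel P (cls6 M))).filter (isMiddle M)

/-- `M'_1`: edges of `M_1` meeting exactly one middle edge of a 3-path of `P*_6` and
no middle edge of a 3-path of `P*_2 ∪ P*_3 ∪ P*_4`. -/
noncomputable def Mset1' (P : Finset (P3 V)) (M : Finset (Sym2 V)) : Finset (Sym2 V) :=
  (Mset1 P M).filter fun f =>
    ((mid6 P M).filter fun g => shares f g).card = 1 ∧
    ∀ g, middleIn M (P234 P M) g → ¬ shares f g

/-- `M''_1`: edges of `M_1` meeting two middle edges of 3-paths of `P*_6`. -/
noncomputable def Mset1'' (P : Finset (P3 V)) (M : Finset (Sym2 V)) : Finset (Sym2 V) :=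
  (Mset1 P M).filter fun f => ((mid6 P M).filter fun g => shares f g).card = 2

/-- `M'''_1`: edges of `M_1` meeting exactly one middle edge of a 3-path of `P*_6` and
at least one middle edge of a 3-path of `P*_2 ∪ P*_3 ∪ P*_4`. -/
noncomputable def Mset1''' (P : Finset (P3 V)) (M : Finset (Sym2 V)) : Finset (Sym2 V) :=
  (Mset1 P M).filter fun f =>
    ((mid6 P M).filter fun g => shares f g).card = 1 ∧
    ∃ g, middleIn M (P234 P M) g ∧ shares f g

/-- Assumption on `P*`: for every 3-path `xyz ∈ P*` with `y ∉ V(M)` and `x, z ∈ V(M)`,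
the vertices `x` and `z` lie in two distinct edges of `M`. -/
def Ass (P : Finset (P3 V)) (M : Finset (Sym2 V)) : Prop :=
  ∀ p ∈ P, ¬ covered M p.y → covered M p.x → covered M p.z →
    ∃ e ∈ M, ∃ f ∈ M, p.x ∈ e ∧ p.z ∈ f ∧ e ≠ f

/-- An admissible edge w.r.t. `M`: either both endpoints are in `V(M)` and lie in two distinct
edges of `M`, or exactly one endpoint is in `V(M)`. -/
def goodEdge (M : Finset (Sym2 V)) (e : Sym2 V) : Prop :=
  (∃ u v : V, e = s(u, v) ∧ covered M u ∧ covered M v ∧ ∀ f ∈ M, ¬(u ∈ f ∧ v ∈ f)) ∨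
  (∃ u v : V, e = s(u, v) ∧ covered M u ∧ ¬ covered M v)


section Helpers

lemma mem_edges_iff' {p : P3 V} {e : Sym2 V} :
    e ∈ p.edges ↔ e = s(p.x, p.y) ∨ e = s(p.y, p.z) := by
  simp [P3.edges]

lemma edges_ne (p : P3 V) : s(p.x, p.y) ≠ s(p.y, p.z) := by
  intro h
  rw [Sym2.eq_iff] at h
  rcases h with ⟨h1, _⟩ | ⟨h1, _⟩
  · exact p.hxy h1
  · exact p.hxz h1

lemma mem_verts_of_mem_edges {p : P3 V} {e : Sym2 V} (he : e ∈ p.edges)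
    {v : V} (hv : v ∈ e) : v ∈ p.verts := by
  rcases mem_edges_iff'.mp he with h | h <;> subst h <;>
    rcases Sym2.mem_iff.mp hv with h | h <;> simp [P3.verts, h]

lemma y_mem_of_mem_edges {p : P3 V} {e : Sym2 V} (he : e ∈ p.edges) : p.y ∈ e := by
  rcases mem_edges_iff'.mp he with h | h <;> subst h <;> simp

lemma injOn_of_edges {S : Finset (P3 V)}
    (hdisj : ∀ p ∈ S, ∀ q ∈ S, p ≠ q → Disjoint p.verts q.verts)
    {g : P3 V → Sym2 V} (hg : ∀ p ∈ S, g p ∈ p.edges) :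
    ∀ p ∈ S, ∀ q ∈ S, g p = g q → p = q := by
  intro p hp q hq h
  by_contra hne
  have hd := hdisj p hp q hq hne
  have h1 : p.y ∈ p.verts := by simp [P3.verts]
  have h2 : p.y ∈ q.verts :=
    mem_verts_of_mem_edges (hg q hq) (h ▸ y_mem_of_mem_edges (hg p hp))
  exact (Finset.disjoint_left.mp hd h1) h2

lemma wg_le_max (w : Sym2 V → ℝ) {p : P3 V} {g : P3 V → Sym2 V} (hg : g p ∈ p.edges) :
    w (g p) ≤ max (w s(p.x, p.y)) (w s(p.y, p.z)) := by
  rcases mem_edges_iff'.mp hg with h | h <;> rw [h]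
  · exact le_max_left _ _
  · exact le_max_right _ _

lemma image_le_maxSum (w : Sym2 V → ℝ) {S : Finset (P3 V)}
    (hdisj : ∀ p ∈ S, ∀ q ∈ S, p ≠ q → Disjoint p.verts q.verts)
    {g : P3 V → Sym2 V} (hg : ∀ p ∈ S, g p ∈ p.edges) :
    ew w (S.image g) ≤ maxSum w S := by
  rw [ew, Finset.sum_image (injOn_of_edges hdisj hg), maxSum]
  exact Finset.sum_le_sum fun p hp => wg_le_max w (hg p hp)

lemma ew_Esub (w : Sym2 V → ℝ) {S : Finset (P3 V)}
    (hdisj : ∀ p ∈ S, ∀ q ∈ S, p ≠ q → Disjoint p.verts q.verts) :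
    ew w (Esub S) = ∑ p ∈ S, p.wt w := by
  rw [ew, Esub, Finset.sum_biUnion]
  · refine Finset.sum_congr rfl fun p _ => ?_
    rw [P3.edges, Finset.sum_pair (edges_ne p)]; rfl
  · intro p hp q hq hne
    refine Finset.disjoint_left.mpr fun e hep heq => ?_
    have := Finset.disjoint_left.mp (hdisj p hp q hq hne)
      (mem_verts_of_mem_edges hep (y_mem_of_mem_edges hep))
    exact this (mem_verts_of_mem_edges heq (y_mem_of_mem_edges hep))

lemma sdiff_le_maxSum (w : Sym2 V → ℝ) {S : Finset (P3 V)}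
    (hdisj : ∀ p ∈ S, ∀ q ∈ S, p ≠ q → Disjoint p.verts q.verts)
    {g : P3 V → Sym2 V} (hg : ∀ p ∈ S, g p ∈ p.edges) :
    ew w (Esub S \ S.image g) ≤ maxSum w S := by
  have hsub : S.image g ⊆ Esub S := by
    intro e he
    obtain ⟨p, hp, rfl⟩ := Finset.mem_image.mp he
    exact Finset.mem_biUnion.mpr ⟨p, hp, hg p hp⟩
  rw [ew, Finset.sum_sdiff_eq_sub hsub]
  have h1 : ∑ e ∈ Esub S, w e = ∑ p ∈ S, p.wt w := ew_Esub w hdisj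
  have h2 : ∑ e ∈ S.image g, w e = ∑ p ∈ S, w (g p) :=
    Finset.sum_image (injOn_of_edges hdisj hg)
  rw [h1, h2, ← Finset.sum_sub_distrib, maxSum]
  refine Finset.sum_le_sum fun p hp => ?_
  rcases mem_edges_iff'.mp (hg p hp) with h | h <;> rw [h, P3.wt]
  · have := le_max_right (w s(p.x, p.y)) (w s(p.y, p.z)); linarith
  · have := le_max_left (w s(p.x, p.y)) (w s(p.y, p.z)); linarith

lemma heavy_mem_edges (w : Sym2 V → ℝ) (p : P3 V) : heavy w p ∈ p.edges := by
  rw [heavy]; split <;> simp [P3.edges]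

lemma w_heavy (w : Sym2 V → ℝ) (p : P3 V) :
    w (heavy w p) = max (w s(p.x, p.y)) (w s(p.y, p.z)) := by
  rw [heavy]; split_ifs with h
  · exact (max_eq_left h).symm
  · exact (max_eq_right (le_of_not_ge h)).symm

end Helpers

lemma auxsum2 (M : Finset (Sym2 V)) (p : P3 V) (m : ℝ) (hm : 0 ≤ m) :
    (if cls1 M p then m else 0) + (if cls2 M p then m else 0) +
    (if cls3 M p then m else 0) + (if cls4 M p then m else 0) +
    (if cls5 M p then m else 0) + (if cls6 M p then m else 0) +
    (if cls7 M p then m else 0) + (if cls8 M p then m else 0) ≤ m := by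
  simp only [cls1, cls2, cls3, cls4, cls5, cls6, cls7, cls8, exOne]
  by_cases hcy : covered M p.y <;> by_cases ha : s(p.x, p.y) ∈ M <;>
    by_cases hb : s(p.y, p.z) ∈ M <;>
    simp only [hcy, ha, hb, not_true, not_false_iff, and_true, and_false, true_and,
      false_and, and_self, or_self, or_false, false_or, true_or, or_true,
      not_true_eq_false, not_false_eq_true] <;>
    split_ifs <;> simp_all <;> split_ifs <;> simp_all <;> first | linarith | (exfalso; first | omega | tauto)

theorem statement_16 (n : ℕ) (hn : Fintype.card V = n) (h3 : 3 ∣ n)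
    (w : Sym2 V → ℝ) (hw : ∀ e : Sym2 V, 0 ≤ w e)
    (M : Finset (Sym2 V)) (hM : IsMaxMatchingOfSize w (n / 3) M)
    (Pstar : Finset (P3 V)) (hP : IsMaxPacking w Pstar) (hAss : Ass Pstar M) :
    (maxSum w (psel Pstar (cls1 M)) + maxSum w (psel Pstar (cls2 M)) +
      maxSum w (psel Pstar (cls3 M)) + maxSum w (psel Pstar (cls4 M)) +
      maxSum w (psel Pstar (cls5 M)) + maxSum w (psel Pstar (cls6 M)) +
      maxSum w (psel Pstar (cls7 M)) + maxSum w (psel Pstar (cls8 M)) ≤ ew w M) ∧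
    max (ew w (X1 w Pstar M)) (ew w (Y1 w Pstar M)) ≤ maxSum w (psel Pstar (cls1 M)) ∧
    max (ew w (X2 Pstar M)) (ew w (Y2 Pstar M)) ≤ maxSum w (psel Pstar (cls2 M)) ∧
    max (ew w (X3 w Pstar M)) (ew w (Y3 w Pstar M)) ≤ maxSum w (psel Pstar (cls3 M)) ∧
    max (ew w (X4 w Pstar M)) (ew w (Y4 w Pstar M)) ≤ maxSum w (psel Pstar (cls4 M)) ∧
    max (ew w (X5 Pstar M)) (ew w (Y5 Pstar M)) ≤ maxSum w (psel Pstar (cls5 M)) ∧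
    max (ew w (X6 Pstar M)) (ew w (Y6 Pstar M)) ≤ maxSum w (psel Pstar (cls6 M)) ∧
    max (ew w (X7 Pstar M)) (ew w (Y7 Pstar M)) ≤ maxSum w (psel Pstar (cls7 M)) ∧
    max (ew w (X8 w Pstar M)) (ew w (Y8 w Pstar M)) ≤ maxSum w (psel Pstar (cls8 M)) := by
  obtain ⟨⟨hcard, hdisjP, hcov⟩, -⟩ := hP
  have hdS : ∀ (c : P3 V → Prop), ∀ p ∈ psel Pstar c, ∀ q ∈ psel Pstar c, p ≠ q →
      Disjoint p.verts q.verts := fun c p hp q hq hne =>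
    hdisjP p (Finset.mem_filter.mp hp).1 q (Finset.mem_filter.mp hq).1 hne
  have hifm : ∀ (c : Prop) [Decidable c] (p : P3 V),
      (if c then s(p.x, p.y) else s(p.y, p.z)) ∈ p.edges := by
    intro c _ p; split <;> simp [P3.edges]
  have hifm' : ∀ (c : Prop) [Decidable c] (p : P3 V),
      (if c then s(p.y, p.z) else s(p.x, p.y)) ∈ p.edges := by
    intro c _ p; split <;> simp [P3.edges]
  refine ⟨?_, ?_, ?_, ?_, ?_, ?_, ?_, ?_, ?_⟩
  · -- main inequality
    set M' : Finset (Sym2 V) := Pstar.image (heavy w) with hM'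
    have hinj := injOn_of_edges hdisjP (fun p _ => heavy_mem_edges w p)
    have hmatch : IsMatching M' := by
      constructor
      · intro e he
        obtain ⟨p, hp, rfl⟩ := Finset.mem_image.mp he
        rcases mem_edges_iff'.mp (heavy_mem_edges w p) with h | h <;> rw [h, Sym2.mk_isDiag_iff]
        · exact p.hxy
        · exact p.hyz
      · intro e he f hf hef v hve hvf
        obtain ⟨p, hp, rfl⟩ := Finset.mem_image.mp he
        obtain ⟨q, hq, rfl⟩ := Finset.mem_image.mp hf
        have hpq : p ≠ q := fun h => hef (by rw [h])
        exact Finset.disjoint_left.mp (hdisjP p hp q hq hpq)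
          (mem_verts_of_mem_edges (heavy_mem_edges w p) hve)
          (mem_verts_of_mem_edges (heavy_mem_edges w q) hvf)
    have hcard' : M'.card = n / 3 := by
      rw [hM', Finset.card_image_of_injOn (fun p hp q hq => hinj p hp q hq), hcard, hn]
    have hMM := hM.2.2 M' hmatch hcard'
    have hEw : ew w M' = maxSum w Pstar := by
      rw [ew, hM', Finset.sum_image hinj, maxSum]
      exact Finset.sum_congr rfl fun p _ => w_heavy w p
    have hstep : maxSum w (psel Pstar (cls1 M)) + maxSum w (psel Pstar (cls2 M)) +
        maxSum w (psel Pstar (cls3 M)) + maxSum w (psel Pstar (cls4 M)) +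
        maxSum w (psel Pstar (cls5 M)) + maxSum w (psel Pstar (cls6 M)) +
        maxSum w (psel Pstar (cls7 M)) + maxSum w (psel Pstar (cls8 M)) ≤ maxSum w Pstar := by
      simp only [maxSum, psel, Finset.sum_filter, ← Finset.sum_add_distrib]
      exact Finset.sum_le_sum fun p _ => auxsum2 M p _ (le_max_of_le_left (hw _))
    linarith [hEw ▸ hMM]
  · exact max_le (by rw [X1]; exact image_le_maxSum w (hdS _) fun p _ => heavy_mem_edges w p)
      (by rw [Y1, X1]; exact sdiff_le_maxSum w (hdS _) fun p _ => heavy_mem_edges w p)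
  · exact max_le (by rw [X2]; exact image_le_maxSum w (hdS _) fun p _ => hifm _ p)
      (by rw [Y2, X2]; exact sdiff_le_maxSum w (hdS _) fun p _ => hifm _ p)
  · exact max_le (by rw [X3]; exact image_le_maxSum w (hdS _) fun p _ => heavy_mem_edges w p)
      (by rw [Y3, X3]; exact sdiff_le_maxSum w (hdS _) fun p _ => heavy_mem_edges w p)
  · exact max_le (by rw [X4]; exact image_le_maxSum w (hdS _) fun p _ => heavy_mem_edges w p)
      (by rw [Y4, X4]; exact sdiff_le_maxSum w (hdS _) fun p _ => heavy_mem_edges w p)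
  · exact max_le (by rw [X5]; exact image_le_maxSum w (hdS _) fun p _ => hifm' _ p)
      (by rw [Y5, X5]; exact sdiff_le_maxSum w (hdS _) fun p _ => hifm' _ p)
  · exact max_le (by rw [X6]; exact image_le_maxSum w (hdS _) fun p _ => hifm' _ p)
      (by rw [Y6, X6]; exact sdiff_le_maxSum w (hdS _) fun p _ => hifm' _ p)
  · exact max_le (by rw [X7]; exact image_le_maxSum w (hdS _) fun p _ => hifm' _ p)
      (by rw [Y7, X7]; exact sdiff_le_maxSum w (hdS _) fun p _ => hifm' _ p)
  · exact max_le (by rw [X8]; exact image_le_maxSum w (hdS _) fun p _ => heavy_mem_edges w p)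
      (by rw [Y8, X8]; exact sdiff_le_maxSum w (hdS _) fun p _ => heavy_mem_edges w p)

end MW3PP
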